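/- Let κ be an infinite cardinal and let P be a polynomial functor given by A : Type u and B : A → Type u with #(B a) ≤ κ for every a : A. Let X : Type u and f : X → Σ a : A, (B a → X) be a P-coalgebra. Then for every x₀ : X there exists a least subset S ⊆ X such that x₀ ∈ S and S is closed under the coalgebra (i.e. for all x ∈ S and all b : B (f x).1, (f x).2 b ∈ S): S is contained in every subset of X containing x₀ and closed under f. Moreover this least subcoalgebra S has cardinality #S ≤ κ. -/
import Mathlib


open Cardinal

universe u

theorem generated_subcoalgebra_polynomial (κ : Cardinal.{u}) (hκ : ℵ₀ ≤ κ)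
    (P : PFunctor.{u}) (hB : ∀ a : P.A, #(P.B a) ≤ κ)
    (X : Type u) (f : X → Σ a : P.A, P.B a → X) (x₀ : X) :
    ∃ S : Set X,
      (x₀ ∈ S ∧ ∀ x ∈ S, ∀ b : P.B (f x).1, (f x).2 b ∈ S) ∧
      (∀ T : Set X, x₀ ∈ T → (∀ x ∈ T, ∀ b : P.B (f x).1, (f x).2 b ∈ T) → S ⊆ T) ∧
      #S ≤ κ := by
  classical
  -- iterated stages
  let g : Set X → Set X := fun s => ⋃ x ∈ s, Set.range (f x).2
  let St : ℕ → Set X := fun n => Nat.rec ({x₀} : Set X) (fun _ s => g s) n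
  have hSt0 : St 0 = {x₀} := rfl
  have hStS : ∀ n, St (n + 1) = g (St n) := fun n => rfl
  refine ⟨⋃ n, St n, ⟨Set.mem_iUnion.2 ⟨0, rfl⟩, ?_⟩, ?_, ?_⟩
  · intro x hx b
    obtain ⟨n, hn⟩ := Set.mem_iUnion.1 hx
    exact Set.mem_iUnion.2 ⟨n + 1, by
      rw [hStS]
      exact Set.mem_biUnion hn ⟨b, rfl⟩⟩
  · intro T hT0 hTcl
    refine Set.iUnion_subset fun n => ?_
    induction n with
    | zero => simpa [hSt0] using hT0
    | succ n ih =>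
        rw [hStS]
        rintro y hy
        obtain ⟨x, hx, b, rfl⟩ := by simpa [g] using hy
        exact hTcl x (ih hx) b
  · have hstage : ∀ n, #(↥(St n)) ≤ κ := by
      intro n
      induction n with
      | zero =>
          rw [hSt0]
          simpa using (one_le_aleph0.trans hκ)
      | succ n ih =>
          rw [hStS, show g (St n) = ⋃ x : ↥(St n), Set.range (f x.1).2 from
            Set.biUnion_eq_iUnion _ _]
          calc #(↥(⋃ x : ↥(St n), Set.range (f x.1).2))
              ≤ Cardinal.sum fun x : ↥(St n) => #(Set.range (f x.1).2) :=
                Cardinal.mk_iUnion_le_sum_mk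
            _ ≤ Cardinal.sum fun _ : ↥(St n) => κ :=
                Cardinal.sum_le_sum _ _ fun x => (Cardinal.mk_range_le).trans (hB _)
            _ = #(↥(St n)) * κ := Cardinal.sum_const' _ _
            _ ≤ κ * κ := mul_le_mul_left ih κ
            _ = κ := Cardinal.mul_eq_self hκ
    have hU : (⋃ n, St n) = ⋃ i : ULift.{u} ℕ, St i.down := by
      ext x
      constructor
      · rintro ⟨_, ⟨n, rfl⟩, hx⟩; exact ⟨_, ⟨⟨n⟩, rfl⟩, hx⟩
      · rintro ⟨_, ⟨i, rfl⟩, hx⟩; exact ⟨_, ⟨i.down, rfl⟩, hx⟩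
    rw [hU]
    calc #(↥(⋃ i : ULift.{u} ℕ, St i.down))
        ≤ Cardinal.sum fun i : ULift.{u} ℕ => #(↥(St i.down)) :=
          Cardinal.mk_iUnion_le_sum_mk
      _ ≤ Cardinal.sum fun _ : ULift.{u} ℕ => κ :=
          Cardinal.sum_le_sum _ _ fun i => hstage i.down
      _ = #(ULift.{u} ℕ) * κ := Cardinal.sum_const' _ _
      _ = ℵ₀ * κ := by rw [Cardinal.mk_denumerable]
      _ = κ := by
          rw [Cardinal.mul_eq_max le_rfl hκ]
          exact max_eq_right hκ
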